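/- For any 2×2 matrix A over the Hamilton quaternions, ddet A = 0 if and only if the rows of A are left linearly dependent over ℍ (equivalently, the columns are right linearly dependent), where ddet A = rdet₁(A*A). -/

import Mathlib

open Quaternion


noncomputable def rdet1 (B : Matrix (Fin 2) (Fin 2) (Quaternion ℝ)) : Quaternion ℝ :=
  B 0 0 * B 1 1 - B 0 1 * B 1 0

noncomputable def ddet (A : Matrix (Fin 2) (Fin 2) (Quaternion ℝ)) : Quaternion ℝ :=
  rdet1 (A.conjTranspose * A)


private lemma ddet_eq' (A : Matrix (Fin 2) (Fin 2) (Quaternion ℝ)) :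
    ddet A = ↑((normSq (A 0 0) + normSq (A 1 0)) * (normSq (A 0 1) + normSq (A 1 1))
      - normSq (star (A 0 0) * A 0 1 + star (A 1 0) * A 1 1)) := by
  have h1 : ((star (A 0 0) * A 0 1 + star (A 1 0) * A 1 1) : Quaternion ℝ) *
      (star (A 0 1) * A 0 0 + star (A 1 1) * A 1 0)
      = ↑(normSq (star (A 0 0) * A 0 1 + star (A 1 0) * A 1 1)) := by
    rw [← self_mul_star]
    simp [star_mul]
  simp only [ddet, rdet1, Matrix.mul_apply, Matrix.conjTranspose_apply, Fin.sum_univ_two]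
  rw [h1, star_mul_self, star_mul_self, star_mul_self, star_mul_self]
  push_cast
  ring

private lemma key' (a b c d : Quaternion ℝ) :
    star ((↑(normSq a + normSq c) : Quaternion ℝ) * b - a * (star a * b + star c * d)) *
        ((↑(normSq a + normSq c) : Quaternion ℝ) * b - a * (star a * b + star c * d))
      + star ((↑(normSq a + normSq c) : Quaternion ℝ) * d - c * (star a * b + star c * d)) *
        ((↑(normSq a + normSq c) : Quaternion ℝ) * d - c * (star a * b + star c * d))
      = ↑((normSq a + normSq c) *
          ((normSq a + normSq c) * (normSq b + normSq d)
            - normSq (star a * b + star c * d))) := by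
  simp only [Quaternion.ext_iff, normSq_def', star_mul, star_add, star_star]
  simp only [Quaternion.re_mul, Quaternion.imI_mul, Quaternion.imJ_mul, Quaternion.imK_mul,
    Quaternion.re_add, Quaternion.imI_add, Quaternion.imJ_add, Quaternion.imK_add,
    Quaternion.re_sub, Quaternion.imI_sub, Quaternion.imJ_sub, Quaternion.imK_sub,
    Quaternion.re_star, Quaternion.imI_star, Quaternion.imJ_star, Quaternion.imK_star,
    Quaternion.re_coe, Quaternion.imI_coe, Quaternion.imJ_coe, Quaternion.imK_coe]
  refine ⟨by ring, by ring, by ring, by ring⟩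

private lemma right_dep' (u v : Quaternion ℝ) :
    ∃ d₁ d₂ : Quaternion ℝ, (d₁ ≠ 0 ∨ d₂ ≠ 0) ∧ u * d₁ + v * d₂ = 0 := by
  by_cases hu : u = 0
  · exact ⟨1, 0, Or.inl one_ne_zero, by simp [hu]⟩
  · refine ⟨u⁻¹ * v, -1, Or.inr (by simp), ?_⟩
    rw [← mul_assoc, mul_inv_cancel₀ hu, one_mul, mul_neg_one, add_neg_cancel]

private lemma left_dep' (u v : Quaternion ℝ) :
    ∃ c₁ c₂ : Quaternion ℝ, (c₁ ≠ 0 ∨ c₂ ≠ 0) ∧ c₁ * u + c₂ * v = 0 := by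
  by_cases hu : u = 0
  · exact ⟨1, 0, Or.inl one_ne_zero, by simp [hu]⟩
  · refine ⟨v * u⁻¹, -1, Or.inr (by simp), ?_⟩
    rw [mul_assoc, inv_mul_cancel₀ hu, mul_one, neg_one_mul, add_neg_cancel]


private lemma col_iff' (A : Matrix (Fin 2) (Fin 2) (Quaternion ℝ)) :
    ddet A = 0 ↔
      ∃ d₁ d₂ : Quaternion ℝ, (d₁ ≠ 0 ∨ d₂ ≠ 0) ∧
        (∀ i, A i 0 * d₁ + A i 1 * d₂ = 0) := by
  have hco : ∀ x : ℝ, ((x : Quaternion ℝ) = 0 ↔ x = 0) := fun x =>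
    ⟨fun h => by simpa using congrArg QuaternionAlgebra.re h, fun h => by rw [h]; simp⟩
  rw [ddet_eq' A, hco]
  set a := A 0 0
  set b := A 0 1
  set c := A 1 0
  set d := A 1 1
  set p : Quaternion ℝ := star a * b + star c * d with hp
  set nx : ℝ := normSq a + normSq c with hnx
  constructor
  · intro h
    by_cases h0 : nx = 0
    · have hna : normSq a = 0 ∧ normSq c = 0 := by
        constructor <;> nlinarith [normSq_nonneg (a := a), normSq_nonneg (a := c)]
      have ha : a = 0 := normSq_eq_zero.mp hna.1
      have hc : c = 0 := normSq_eq_zero.mp hna.2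
      refine ⟨1, 0, Or.inl one_ne_zero, fun i => ?_⟩
      fin_cases i <;> simp only [one_mul, mul_one, mul_zero, add_zero]
      · exact ha
      · exact hc
    · have hz := key' a b c d
      rw [← hp, ← hnx] at hz
      have h1 : nx * (nx * (normSq b + normSq d) - normSq p) = 0 := by rw [h, mul_zero]
      rw [h1] at hz
      have hz2 : normSq ((↑nx : Quaternion ℝ) * b - a * p) = 0 ∧
          normSq ((↑nx : Quaternion ℝ) * d - c * p) = 0 := by
        rw [star_mul_self, star_mul_self] at hz
        have : (↑(normSq ((↑nx : Quaternion ℝ) * b - a * p)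
            + normSq ((↑nx : Quaternion ℝ) * d - c * p)) : Quaternion ℝ) = 0 := by
          push_cast; rw [hz]; norm_cast
        rw [hco] at this
        constructor <;> nlinarith [normSq_nonneg (a := (↑nx : Quaternion ℝ) * b - a * p),
          normSq_nonneg (a := (↑nx : Quaternion ℝ) * d - c * p)]
      have hb : (↑nx : Quaternion ℝ) * b = a * p := by
        have := normSq_eq_zero.mp hz2.1; linear_combination (norm := abel) this
      have hd : (↑nx : Quaternion ℝ) * d = c * p := by
        have := normSq_eq_zero.mp hz2.2; linear_combination (norm := abel) this
      refine ⟨-p, ↑nx, Or.inr fun hcon => h0 (by simpa using congrArg QuaternionAlgebra.re hcon), fun i => ?_⟩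
      fin_cases i
      · show a * -p + b * ↑nx = 0
        rw [← Quaternion.coe_commutes, hb, mul_neg, neg_add_cancel]
      · show c * -p + d * ↑nx = 0
        rw [← Quaternion.coe_commutes, hd, mul_neg, neg_add_cancel]
  · rintro ⟨e₁, e₂, hne, hcol⟩
    have h0 : a * e₁ + b * e₂ = 0 := hcol 0
    have h1 : c * e₁ + d * e₂ = 0 := hcol 1
    by_cases he₂ : e₂ = 0
    · have he₁ : e₁ ≠ 0 := by tauto
      rw [he₂, mul_zero, add_zero] at h0 h1
      have ha : a = 0 := by rcases mul_eq_zero.mp h0 with h | h; exact h; exact absurd h he₁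
      have hc : c = 0 := by rcases mul_eq_zero.mp h1 with h | h; exact h; exact absurd h he₁
      simp [hp, hnx, ha, hc]
    · set r : Quaternion ℝ := -(e₁ * e₂⁻¹) with hr
      have hb : b = a * r := by
        have h2 : b * e₂ = -(a * e₁) := by linear_combination (norm := abel) h0
        calc b = b * e₂ * e₂⁻¹ := by rw [mul_assoc, mul_inv_cancel₀ he₂, mul_one]
          _ = -(a * e₁) * e₂⁻¹ := by rw [h2]
          _ = a * r := by rw [hr, neg_mul, mul_assoc, mul_neg]
      have hd : d = c * r := by
        have h2 : d * e₂ = -(c * e₁) := by linear_combination (norm := abel) h1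
        calc d = d * e₂ * e₂⁻¹ := by rw [mul_assoc, mul_inv_cancel₀ he₂, mul_one]
          _ = -(c * e₁) * e₂⁻¹ := by rw [h2]
          _ = c * r := by rw [hr, neg_mul, mul_assoc, mul_neg]
      have hpp : p = (↑nx : Quaternion ℝ) * r := by
        rw [hp, hb, hd, ← mul_assoc, ← mul_assoc, star_mul_self, star_mul_self, hnx]
        push_cast
        rw [add_mul]
      rw [hpp, hb, hd]
      rw [map_mul, map_mul, map_mul, normSq_coe]
      ring

private lemma rows_iff_cols' (A : Matrix (Fin 2) (Fin 2) (Quaternion ℝ)) :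
    (∃ c₁ c₂ : Quaternion ℝ, (c₁ ≠ 0 ∨ c₂ ≠ 0) ∧ (∀ j, c₁ * A 0 j + c₂ * A 1 j = 0)) ↔
    (∃ d₁ d₂ : Quaternion ℝ, (d₁ ≠ 0 ∨ d₂ ≠ 0) ∧ (∀ i, A i 0 * d₁ + A i 1 * d₂ = 0)) := by
  constructor
  · rintro ⟨c₁, c₂, hne, h⟩
    by_cases hc₁ : c₁ = 0
    · have hc₂ : c₂ ≠ 0 := by tauto
      have hz : ∀ j, A 1 j = 0 := fun j => by
        have := h j
        rw [hc₁, zero_mul, zero_add] at this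
        rcases mul_eq_zero.mp this with h' | h'
        · exact absurd h' hc₂
        · exact h'
      obtain ⟨d₁, d₂, hd, hs⟩ := right_dep' (A 0 0) (A 0 1)
      refine ⟨d₁, d₂, hd, fun i => ?_⟩
      fin_cases i
      · exact hs
      · show A 1 0 * d₁ + A 1 1 * d₂ = 0
        rw [hz 0, hz 1, zero_mul, zero_mul, add_zero]
    · have hA : ∀ j, A 0 j = -(c₁⁻¹ * c₂) * A 1 j := fun j => by
        have h2 : c₁ * A 0 j = -(c₂ * A 1 j) := by linear_combination (norm := abel) (h j)
        calc A 0 j = c₁⁻¹ * (c₁ * A 0 j) := by rw [← mul_assoc, inv_mul_cancel₀ hc₁, one_mul]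
          _ = -(c₁⁻¹ * c₂) * A 1 j := by rw [h2, mul_neg, ← mul_assoc, neg_mul]
      obtain ⟨d₁, d₂, hd, hs⟩ := right_dep' (A 1 0) (A 1 1)
      refine ⟨d₁, d₂, hd, fun i => ?_⟩
      fin_cases i
      · show A 0 0 * d₁ + A 0 1 * d₂ = 0
        rw [hA 0, hA 1, mul_assoc, mul_assoc, ← mul_add, hs, mul_zero]
      · exact hs
  · rintro ⟨d₁, d₂, hne, h⟩
    by_cases hd₁ : d₁ = 0
    · have hd₂ : d₂ ≠ 0 := by tauto
      have hz : ∀ i, A i 1 = 0 := fun i => by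
        have := h i
        rw [hd₁, mul_zero, zero_add] at this
        rcases mul_eq_zero.mp this with h' | h'
        · exact h'
        · exact absurd h' hd₂
      obtain ⟨c₁, c₂, hc, hs⟩ := left_dep' (A 0 0) (A 1 0)
      refine ⟨c₁, c₂, hc, fun j => ?_⟩
      fin_cases j
      · exact hs
      · show c₁ * A 0 1 + c₂ * A 1 1 = 0
        rw [hz 0, hz 1, mul_zero, mul_zero, add_zero]
    · have hA : ∀ i, A i 0 = A i 1 * -(d₂ * d₁⁻¹) := fun i => by
        have h2 : A i 1 * d₂ = -(A i 0 * d₁) := by linear_combination (norm := abel) (h i)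
        calc A i 0 = A i 0 * d₁ * d₁⁻¹ := by rw [mul_assoc, mul_inv_cancel₀ hd₁, mul_one]
          _ = A i 1 * -(d₂ * d₁⁻¹) := by
              rw [← neg_neg (A i 0 * d₁), ← h2, neg_mul, mul_neg, mul_assoc]
      obtain ⟨c₁, c₂, hc, hs⟩ := left_dep' (A 0 1) (A 1 1)
      refine ⟨c₁, c₂, hc, fun j => ?_⟩
      fin_cases j
      · show c₁ * A 0 0 + c₂ * A 1 0 = 0
        rw [hA 0, hA 1, ← mul_assoc, ← mul_assoc, ← add_mul, hs, zero_mul]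
      · exact hs

theorem ddet_eq_zero_iff_dependent (A : Matrix (Fin 2) (Fin 2) (Quaternion ℝ)) :
    (ddet A = 0 ↔
      ∃ c₁ c₂ : Quaternion ℝ, (c₁ ≠ 0 ∨ c₂ ≠ 0) ∧
        (∀ j, c₁ * A 0 j + c₂ * A 1 j = 0)) ∧
    (ddet A = 0 ↔
      ∃ d₁ d₂ : Quaternion ℝ, (d₁ ≠ 0 ∨ d₂ ≠ 0) ∧
        (∀ i, A i 0 * d₁ + A i 1 * d₂ = 0)) := by
  constructor
  · exact (col_iff' A).trans (rows_iff_cols' A).symm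
  · exact col_iff' A
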